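/- Let H_S = ⊕_{p} (H̃_{S,p} ⊗ H_p) and H_R = ⊕_{p} (H̃_{R,p} ⊗ H_p) be finite direct sums of tensor products of finite-dimensional Hilbert spaces, M : H_S → H_R a linear map, and let the uncertainty set consist of block-diagonal operators Δ = ⊕_p (W_p ⊗ I_{H_p}) with W_p : H̃_{R,p} → H̃_{S,p}. If there exist positive definite operators Γ_p on H_p such that M* (⊕_p I_{H̃_{R,p}} ⊗ Γ_p) M − (⊕_p I_{H̃_{S,p}} ⊗ Γ_p) ≺ 0, then I − Δ M is invertible for every Δ = ⊕_p (W_p ⊗ I_{H_p}) with ‖W_p‖ ≤ 1 for all p. -/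

import Mathlib

open Matrix
open scoped Kronecker ComplexOrder

/-- The operator norm of a (rectangular) matrix viewed as an operator between
Euclidean spaces. -/
noncomputable def euclideanOpNorm {a b : Type*} [Fintype a] [Fintype b] [DecidableEq b]
    (T : Matrix a b ℂ) : ℝ :=
  ‖LinearMap.toContinuousLinearMap (Matrix.toEuclideanLin T)‖

/-- Conjugate transpose of a Kronecker product. -/
lemma kron_conjTranspose {l m n p : Type*} (A : Matrix l m ℂ) (B : Matrix n p ℂ) :
    (A ⊗ₖ B)ᴴ = Aᴴ ⊗ₖ Bᴴ := by
  ext ⟨i, j⟩ ⟨k, l'⟩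
  simp [conjTranspose_apply, kroneckerMap_apply, mul_comm]

/-- Kronecker product subtraction on the left. -/
lemma sub_kron {l m n p : Type*} (A B : Matrix l m ℂ) (C : Matrix n p ℂ) :
    (A - B) ⊗ₖ C = A ⊗ₖ C - B ⊗ₖ C := by
  ext ⟨i, j⟩ ⟨k, l'⟩
  simp [kroneckerMap_apply, sub_mul]

/-- Kronecker product of positive semidefinite matrices is positive semidefinite. -/
lemma kron_posSemidef {m n : Type*} [Fintype m] [Fintype n] [DecidableEq m] [DecidableEq n]
    {A : Matrix m m ℂ} {B : Matrix n n ℂ} (hA : A.PosSemidef) (hB : B.PosSemidef) :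
    (A ⊗ₖ B).PosSemidef := by
  exact hA.kronecker hB

/-- Entrywise formula for `blockDiagonal'` applied to a vector. -/
lemma blockDiagonal'_mulVec_apply {P : Type*} [Fintype P] [DecidableEq P] {m : P → Type*}
    [∀ p, Fintype (m p)] (A : ∀ p, Matrix (m p) (m p) ℂ) (x : (Σ p, m p) → ℂ)
    (p : P) (i : m p) :
    (Matrix.blockDiagonal' A *ᵥ x) ⟨p, i⟩ = (A p *ᵥ fun j => x ⟨p, j⟩) i := by
  simp only [mulVec, dotProduct, ← Finset.univ_sigma_univ, Finset.sum_sigma]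
  rw [Fintype.sum_eq_single p]
  · simp
  · intro q hq
    exact Finset.sum_eq_zero fun j _ => by
      rw [blockDiagonal'_apply_ne _ _ _ (Ne.symm hq), zero_mul]

/-- Quadratic form of a `blockDiagonal'` matrix decomposes as a sum. -/
lemma dot_blockDiagonal' {P : Type*} [Fintype P] [DecidableEq P] {m : P → Type*}
    [∀ p, Fintype (m p)] (A : ∀ p, Matrix (m p) (m p) ℂ) (x : (Σ p, m p) → ℂ) :
    star x ⬝ᵥ (Matrix.blockDiagonal' A *ᵥ x)
      = ∑ p, star (fun i => x ⟨p, i⟩) ⬝ᵥ (A p *ᵥ fun i => x ⟨p, i⟩) := by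
  rw [dotProduct, ← Finset.univ_sigma_univ, Finset.sum_sigma]
  refine Finset.sum_congr rfl fun p _ => Finset.sum_congr rfl fun i _ => ?_
  rw [Pi.star_apply, blockDiagonal'_mulVec_apply]
  rfl

/-- A block diagonal matrix with positive semidefinite blocks is positive semidefinite. -/
lemma blockDiagonal'_posSemidef {P : Type*} [Fintype P] [DecidableEq P] {m : P → Type*}
    [∀ p, Fintype (m p)] [∀ p, DecidableEq (m p)]
    {A : ∀ p, Matrix (m p) (m p) ℂ} (h : ∀ p, (A p).PosSemidef) :
    (Matrix.blockDiagonal' A).PosSemidef := by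
  refine PosSemidef.of_dotProduct_mulVec_nonneg ?_ ?_
  · rw [Matrix.IsHermitian, Matrix.blockDiagonal'_conjTranspose]
    exact congrArg _ (funext fun p => (h p).1)
  · intro x
    rw [dot_blockDiagonal']
    exact Finset.sum_nonneg fun p _ => (h p).dotProduct_mulVec_nonneg _

/-- A quadratic form is a squared norm. -/
lemma dot_star_self_eq_norm (n : Type*) [Fintype n] (v : n → ℂ) :
    star v ⬝ᵥ v = (‖(WithLp.equiv 2 (n → ℂ)).symm v‖ : ℂ) ^ 2 := by
  rw [show star v ⬝ᵥ v = inner ℂ ((WithLp.equiv 2 (n → ℂ)).symm v) ((WithLp.equiv 2 (n → ℂ)).symm v)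
    from (dotProduct_comm _ _).trans (EuclideanSpace.inner_toLp_toLp v v).symm,
    inner_self_eq_norm_sq_to_K]
  norm_cast

/-- If the operator norm of `W` is at most one, then `1 - Wᴴ W` is positive semidefinite. -/
lemma one_sub_conjTranspose_mul_self_posSemidef {a b : Type*} [Fintype a] [Fintype b]
    [DecidableEq b] (W : Matrix a b ℂ) (hW : euclideanOpNorm W ≤ 1) :
    ((1 : Matrix b b ℂ) - Wᴴ * W).PosSemidef := by
  refine PosSemidef.of_dotProduct_mulVec_nonneg ?_ ?_
  · exact (Matrix.isHermitian_one).sub (Matrix.isHermitian_conjTranspose_mul_self W)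
  · intro v
    rw [Matrix.sub_mulVec, dotProduct_sub, Matrix.one_mulVec]
    have h1 : star v ⬝ᵥ ((Wᴴ * W) *ᵥ v) = star (W *ᵥ v) ⬝ᵥ (W *ᵥ v) := by
      rw [Matrix.star_mulVec, ← Matrix.dotProduct_mulVec, Matrix.mulVec_mulVec]
    rw [h1, dot_star_self_eq_norm, dot_star_self_eq_norm]
    have hle : ‖(WithLp.equiv 2 (a → ℂ)).symm (W *ᵥ v)‖
        ≤ ‖(WithLp.equiv 2 (b → ℂ)).symm v‖ := by
      have := (LinearMap.toContinuousLinearMap (Matrix.toEuclideanLin W)).le_opNorm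
        ((WithLp.equiv 2 (b → ℂ)).symm v)
      have h2 : (LinearMap.toContinuousLinearMap (Matrix.toEuclideanLin W))
          ((WithLp.equiv 2 (b → ℂ)).symm v)
          = (WithLp.equiv 2 (a → ℂ)).symm (W *ᵥ v) := by
        simp [LinearMap.coe_toContinuousLinearMap']
      rw [h2] at this
      calc ‖(WithLp.equiv 2 (a → ℂ)).symm (W *ᵥ v)‖
          ≤ euclideanOpNorm W * ‖(WithLp.equiv 2 (b → ℂ)).symm v‖ := this
        _ ≤ 1 * ‖(WithLp.equiv 2 (b → ℂ)).symm v‖ :=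
            mul_le_mul_of_nonneg_right hW (norm_nonneg _)
        _ = _ := one_mul _
    have : (0 : ℝ) ≤ ‖(WithLp.equiv 2 (b → ℂ)).symm v‖ ^ 2
        - ‖(WithLp.equiv 2 (a → ℂ)).symm (W *ᵥ v)‖ ^ 2 := by
      have := pow_le_pow_left₀ (norm_nonneg _) hle 2
      linarith
    calc (0 : ℂ) = ((0 : ℝ) : ℂ) := by norm_num
      _ ≤ ((‖(WithLp.equiv 2 (b → ℂ)).symm v‖ ^ 2
          - ‖(WithLp.equiv 2 (a → ℂ)).symm (W *ᵥ v)‖ ^ 2 : ℝ) : ℂ) := by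
            exact_mod_cast Complex.real_le_real.mpr this
      _ = _ := by push_cast; ring

/-- Structured Stein inequality implies structured small gain, higher
multiplicity case.  With `H_S = ⊕_p (H̃_{S,p} ⊗ H_p)`, `H_R = ⊕_p (H̃_{R,p} ⊗ H_p)`
(all finite-dimensional, realized via Kronecker products of matrices), if there
exist positive definite `Γ_p` on `H_p` with
`M* (⊕_p I ⊗ Γ_p) M − (⊕_p I ⊗ Γ_p) ≺ 0`, then `I − Δ M` is invertible for
every `Δ = ⊕_p (W_p ⊗ I_{H_p})` with `‖W_p‖ ≤ 1` for all `p`. -/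
theorem structured_stein_implies_small_gain
    {P : Type*} [Fintype P] [DecidableEq P]
    (ns nr d : P → ℕ)
    (M : Matrix (Σ p : P, Fin (nr p) × Fin (d p)) (Σ p : P, Fin (ns p) × Fin (d p)) ℂ)
    (Γ : ∀ p : P, Matrix (Fin (d p)) (Fin (d p)) ℂ)
    (hΓ : ∀ p, (Γ p).PosDef)
    (hStein : (-(Mᴴ *
        Matrix.blockDiagonal' (fun p => (1 : Matrix (Fin (nr p)) (Fin (nr p)) ℂ) ⊗ₖ Γ p) * M
        - Matrix.blockDiagonal'
            (fun p => (1 : Matrix (Fin (ns p)) (Fin (ns p)) ℂ) ⊗ₖ Γ p))).PosDef) :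
    ∀ W : ∀ p : P, Matrix (Fin (ns p)) (Fin (nr p)) ℂ,
      (∀ p, euclideanOpNorm (W p) ≤ 1) →
      IsUnit ((1 : Matrix (Σ p : P, Fin (ns p) × Fin (d p)) (Σ p : P, Fin (ns p) × Fin (d p)) ℂ)
        - Matrix.blockDiagonal' (fun p => W p ⊗ₖ (1 : Matrix (Fin (d p)) (Fin (d p)) ℂ)) * M) := by
  intro W hW
  classical
  set Δ := Matrix.blockDiagonal' (fun p => W p ⊗ₖ (1 : Matrix (Fin (d p)) (Fin (d p)) ℂ)) with hΔ
  set GR := Matrix.blockDiagonal'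
      (fun p => (1 : Matrix (Fin (nr p)) (Fin (nr p)) ℂ) ⊗ₖ Γ p) with hGR
  set GS := Matrix.blockDiagonal'
      (fun p => (1 : Matrix (Fin (ns p)) (Fin (ns p)) ℂ) ⊗ₖ Γ p) with hGS
  rw [Matrix.isUnit_iff_isUnit_det, isUnit_iff_ne_zero]
  intro hdet
  obtain ⟨x, hx0, hx⟩ := (Matrix.exists_mulVec_eq_zero_iff).mpr hdet
  set y := M *ᵥ x with hy
  have hxy : x = Δ *ᵥ y := by
    rw [Matrix.sub_mulVec, Matrix.one_mulVec, sub_eq_zero] at hx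
    rw [hx, hy, Matrix.mulVec_mulVec]
  -- Stein inequality gives star y ⬝ᵥ GR y < star x ⬝ᵥ GS x
  have hStein' := hStein.dotProduct_mulVec_pos hx0
  have hMGM : star x ⬝ᵥ ((Mᴴ * GR * M) *ᵥ x) = star y ⬝ᵥ (GR *ᵥ y) := by
    rw [hy, Matrix.star_mulVec, ← Matrix.dotProduct_mulVec, Matrix.mulVec_mulVec,
      Matrix.mulVec_mulVec, Matrix.mul_assoc]
  have key1 : star y ⬝ᵥ (GR *ᵥ y) < star x ⬝ᵥ (GS *ᵥ x) := by
    have h0 : (-(Mᴴ * GR * M - GS)) = GS - Mᴴ * GR * M := neg_sub _ _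
    rw [h0, Matrix.sub_mulVec, dotProduct_sub, hMGM] at hStein'
    exact sub_pos.mp hStein'
  -- Small gain: star x ⬝ᵥ GS x ≤ star y ⬝ᵥ GR y
  have hblock : ∀ p, ((1 : Matrix (Fin (nr p)) (Fin (nr p)) ℂ) ⊗ₖ Γ p)
      - ((W p ⊗ₖ (1 : Matrix (Fin (d p)) (Fin (d p)) ℂ))ᴴ
          * ((1 : Matrix (Fin (ns p)) (Fin (ns p)) ℂ) ⊗ₖ Γ p)
          * (W p ⊗ₖ (1 : Matrix (Fin (d p)) (Fin (d p)) ℂ)))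
      = ((1 : Matrix (Fin (nr p)) (Fin (nr p)) ℂ) - (W p)ᴴ * W p) ⊗ₖ Γ p := by
    intro p
    simp only [kron_conjTranspose, conjTranspose_one, ← Matrix.mul_kronecker_mul,
      Matrix.one_mul, Matrix.mul_one, ← sub_kron]
  have hΔGSΔ : GR - Δᴴ * GS * Δ
      = Matrix.blockDiagonal' (fun p =>
          ((1 : Matrix (Fin (nr p)) (Fin (nr p)) ℂ) - (W p)ᴴ * W p) ⊗ₖ Γ p) := by
    rw [hΔ, Matrix.blockDiagonal'_conjTranspose, hGS, ← Matrix.blockDiagonal'_mul,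
      ← Matrix.blockDiagonal'_mul, hGR, ← Matrix.blockDiagonal'_sub]
    refine congrArg _ (funext fun p => ?_)
    simpa only [Pi.sub_apply] using hblock p
  have hPSD : (GR - Δᴴ * GS * Δ).PosSemidef := by
    rw [hΔGSΔ]
    exact blockDiagonal'_posSemidef fun p =>
      kron_posSemidef (one_sub_conjTranspose_mul_self_posSemidef (W p) (hW p))
        (hΓ p).posSemidef
  have key2 : star x ⬝ᵥ (GS *ᵥ x) ≤ star y ⬝ᵥ (GR *ᵥ y) := by
    have hq := hPSD.dotProduct_mulVec_nonneg y
    rw [Matrix.sub_mulVec, dotProduct_sub] at hq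
    have hxGS : star x ⬝ᵥ (GS *ᵥ x) = star y ⬝ᵥ ((Δᴴ * GS * Δ) *ᵥ y) := by
      rw [hxy, Matrix.star_mulVec, ← Matrix.dotProduct_mulVec, Matrix.mulVec_mulVec,
        Matrix.mulVec_mulVec, Matrix.mul_assoc]
    rw [hxGS]
    exact sub_nonneg.mp hq
  exact absurd key1 (not_lt_of_ge key2)
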